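/- Let κ₀ ∈ ℂ with κ₀ ≠ 0, put λ₀ = κ₀², let b₀, c₀ ∈ ℂ, define η₀(x₊, x₋) = x₊/(2λ₀) − 2λ₀x₋, and on the open set of points (x₊, x₋) ∈ ℝ² where c₀ + (b₀/(2κ₀))e^{η₀} ≠ 0 define r(x₊, x₋) = (c₀ − (b₀/(2κ₀))e^{η₀}) / (c₀ + (b₀/(2κ₀))e^{η₀}). Then at every such point, 4·(r·∂₊∂₋r − (∂₊r)·(∂₋r)) = 1 − r⁴, where ∂± denote ∂/∂x±. -/

import Mathlib

set_option maxHeartbeats 1000000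


open Matrix Complex

/-- Partial derivative with respect to the first light-cone coordinate `x₊`. -/
noncomputable def dplus (f : ℝ × ℝ → ℂ) (p : ℝ × ℝ) : ℂ :=
  deriv (fun x => f (x, p.2)) p.1

/-- Partial derivative with respect to the second light-cone coordinate `x₋`. -/
noncomputable def dminus (f : ℝ × ℝ → ℂ) (p : ℝ × ℝ) : ℂ :=
  deriv (fun y => f (p.1, y)) p.2

/-- The linear function `η₀(x₊, x₋) = x₊/(2λ₀) − 2λ₀x₋`. -/
noncomputable def eta (lam : ℂ) (p : ℝ × ℝ) : ℂ :=
  (p.1 : ℂ) / (2 * lam) - 2 * lam * (p.2 : ℂ)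

/-- The function `r = e^{iu}`, where `u` is the bosonic body of the one-soliton
solution `s₂[1]` of the SUSY sine-Gordon equation. -/
noncomputable def rOneSoliton (κ lam b c : ℂ) (p : ℝ × ℝ) : ℂ :=
  (c - (b / (2 * κ)) * exp (eta lam p)) / (c + (b / (2 * κ)) * exp (eta lam p))

lemma hasDerivAt_eta_y (lam : ℂ) (x y : ℝ) :
    HasDerivAt (fun t : ℝ => eta lam (x, t)) (-(2 * lam)) y := by
  have h1 : HasDerivAt (fun t : ℝ => (t : ℂ)) 1 y := by
    simpa using (hasDerivAt_id y).ofReal_comp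
  have h2 := (h1.const_mul (2 * lam)).const_sub ((x : ℂ) / (2 * lam))
  simpa [_root_.eta] using h2

lemma hasDerivAt_eta_x (lam : ℂ) (x y : ℝ) :
    HasDerivAt (fun t : ℝ => eta lam (t, y)) (1 / (2 * lam)) x := by
  have h1 : HasDerivAt (fun t : ℝ => (t : ℂ)) 1 y := by
    simpa using (hasDerivAt_id y).ofReal_comp
  have h1 : HasDerivAt (fun t : ℝ => (t : ℂ)) 1 x := by
    simpa using (hasDerivAt_id x).ofReal_comp
  have h2 := (h1.div_const (2 * lam)).sub_const (2 * lam * (y : ℂ))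
  simpa [_root_.eta] using h2

lemma dminus_formula (κ lam b c : ℂ) (x y : ℝ)
    (h : c + (b / (2 * κ)) * exp (eta lam (x, y)) ≠ 0) :
    dminus (rOneSoliton κ lam b c) (x, y) =
      4 * c * lam * (b / (2 * κ)) * exp (eta lam (x, y)) /
        (c + (b / (2 * κ)) * exp (eta lam (x, y))) ^ 2 := by
  set A := b / (2 * κ) with hA
  have he : HasDerivAt (fun t : ℝ => exp (eta lam (x, t)))
      (exp (eta lam (x, y)) * (-(2 * lam))) y := (hasDerivAt_eta_y lam x y).cexp
  have hnum := (he.const_mul A).const_sub c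
  have hdenom := (he.const_mul A).const_add c
  have hq := hnum.div hdenom h
  have : dminus (rOneSoliton κ lam b c) (x, y) =
      deriv (fun t : ℝ => (c - A * exp (eta lam (x, t))) /
        (c + A * exp (eta lam (x, t)))) y := by
    simp [dminus, rOneSoliton, hA]
  erw [this, hq.deriv]
  field_simp
  ring

lemma dplus_formula (κ lam b c : ℂ) (hlam : lam ≠ 0) (x y : ℝ)
    (h : c + (b / (2 * κ)) * exp (eta lam (x, y)) ≠ 0) :
    dplus (rOneSoliton κ lam b c) (x, y) =
      -(c * (b / (2 * κ)) * exp (eta lam (x, y))) /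
        (lam * (c + (b / (2 * κ)) * exp (eta lam (x, y))) ^ 2) := by
  set A := b / (2 * κ) with hA
  have he : HasDerivAt (fun t : ℝ => exp (eta lam (t, y)))
      (exp (eta lam (x, y)) * (1 / (2 * lam))) x := (hasDerivAt_eta_x lam x y).cexp
  have hnum := (he.const_mul A).const_sub c
  have hdenom := (he.const_mul A).const_add c
  have hq := hnum.div hdenom h
  have : dplus (rOneSoliton κ lam b c) (x, y) =
      deriv (fun t : ℝ => (c - A * exp (eta lam (t, y))) /
        (c + A * exp (eta lam (t, y)))) x := by
    simp [dplus, rOneSoliton, hA]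
  erw [this, hq.deriv]
  field_simp
  ring

lemma dplus_dminus_formula (κ lam b c : ℂ) (hlam : lam ≠ 0) (x y : ℝ)
    (h : c + (b / (2 * κ)) * exp (eta lam (x, y)) ≠ 0) :
    dplus (fun q => dminus (rOneSoliton κ lam b c) q) (x, y) =
      2 * c * (b / (2 * κ)) * exp (eta lam (x, y)) *
        (c - (b / (2 * κ)) * exp (eta lam (x, y))) /
        (c + (b / (2 * κ)) * exp (eta lam (x, y))) ^ 3 := by
  set A := b / (2 * κ) with hA
  have hcont : Continuous (fun t : ℝ => c + A * exp (eta lam (t, y))) := by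
    have : Continuous (fun t : ℝ => eta lam (t, y)) := by
      unfold _root_.eta
      fun_prop
    continuity
  have hev : ∀ᶠ t in nhds x, c + A * exp (eta lam (t, y)) ≠ 0 :=
    hcont.continuousAt.eventually_ne h
  have heq : (fun t : ℝ => dminus (rOneSoliton κ lam b c) (t, y)) =ᶠ[nhds x]
      (fun t : ℝ => 4 * c * lam * A * exp (eta lam (t, y)) /
        (c + A * exp (eta lam (t, y))) ^ 2) := by
    filter_upwards [hev] with t ht
    exact dminus_formula κ lam b c t y ht
  have hdd : dplus (fun q => dminus (rOneSoliton κ lam b c) q) (x, y) =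
      deriv (fun t : ℝ => 4 * c * lam * A * exp (eta lam (t, y)) /
        (c + A * exp (eta lam (t, y))) ^ 2) x := by
    simp only [dplus]
    exact heq.deriv_eq
  rw [hdd]
  have he : HasDerivAt (fun t : ℝ => exp (eta lam (t, y)))
      (exp (eta lam (x, y)) * (1 / (2 * lam))) x := (hasDerivAt_eta_x lam x y).cexp
  have hnum := he.const_mul (4 * c * lam * A)
  have hD := (he.const_mul A).const_add c
  have hdenom := hD.mul hD
  have hfun : (fun t : ℝ => 4 * c * lam * A * exp (eta lam (t, y)) /
        (c + A * exp (eta lam (t, y))) ^ 2) =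
      fun t : ℝ => 4 * c * lam * A * exp (eta lam (t, y)) /
        ((c + A * exp (eta lam (t, y))) * (c + A * exp (eta lam (t, y)))) := by
    funext t; ring_nf
  rw [hfun]
  have hq := hnum.div hdenom (mul_ne_zero h h)
  erw [hq.deriv]
  simp only [Pi.mul_apply]
  field_simp
  ring

/-- on the set where the denominator of `r` is nonzero,
`4(r·∂₊∂₋r − ∂₊r·∂₋r) = 1 − r⁴`, i.e. `u = −i log r` solves
`∂₊∂₋u = −(1/2)sin(2u)`. -/
theorem oneSoliton_solves_sineGordon (κ₀ lam₀ b₀ c₀ : ℂ) (hκ : κ₀ ≠ 0)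
    (hlam : lam₀ = κ₀ ^ 2) (p : ℝ × ℝ)
    (hden : c₀ + (b₀ / (2 * κ₀)) * exp (eta lam₀ p) ≠ 0) :
    4 * (rOneSoliton κ₀ lam₀ b₀ c₀ p *
          dplus (fun q => dminus (rOneSoliton κ₀ lam₀ b₀ c₀) q) p -
        dplus (rOneSoliton κ₀ lam₀ b₀ c₀) p * dminus (rOneSoliton κ₀ lam₀ b₀ c₀) p) =
      1 - (rOneSoliton κ₀ lam₀ b₀ c₀ p) ^ 4 := by
  have hlam0 : lam₀ ≠ 0 := by rw [hlam]; exact pow_ne_zero 2 hκ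
  obtain ⟨x, y⟩ := p
  rw [dminus_formula κ₀ lam₀ b₀ c₀ x y hden,
      dplus_formula κ₀ lam₀ b₀ c₀ hlam0 x y hden,
      dplus_dminus_formula κ₀ lam₀ b₀ c₀ hlam0 x y hden,
      rOneSoliton]
  have key : ∀ A e : ℂ, c₀ + A * e ≠ 0 →
      4 * ((c₀ - A * e) / (c₀ + A * e) *
            (2 * c₀ * A * e * (c₀ - A * e) / (c₀ + A * e) ^ 3) -
          -(c₀ * A * e) / (lam₀ * (c₀ + A * e) ^ 2) *
            (4 * c₀ * lam₀ * A * e / (c₀ + A * e) ^ 2)) =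
        1 - ((c₀ - A * e) / (c₀ + A * e)) ^ 4 := by
    intro A e h
    have hmid : -(c₀ * A * e) / (lam₀ * (c₀ + A * e) ^ 2) *
        (4 * c₀ * lam₀ * A * e / (c₀ + A * e) ^ 2) =
        -(4 * c₀ ^ 2 * A ^ 2 * e ^ 2) / (c₀ + A * e) ^ 4 := by
      rw [div_mul_div_comm,
        div_eq_div_iff (mul_ne_zero (mul_ne_zero hlam0 (pow_ne_zero 2 h)) (pow_ne_zero 2 h))
          (pow_ne_zero 4 h)]
      ring
    have hD : (c₀ + A * e) * (c₀ + A * e) ^ 3 = (c₀ + A * e) ^ 4 := by ring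
    rw [hmid, div_mul_div_comm, div_pow, hD, ← sub_div, ← mul_div_assoc,
      eq_sub_iff_add_eq, ← add_div, div_eq_one_iff_eq (pow_ne_zero 4 h)]
    ring
  exact key _ _ hden
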